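/- Let m ≥ 1, let (p_S) be a family of real numbers indexed by subsets S ⊆ {1,…,m}, and let α ∈ (0,1). Define p_i* = max{p_S : S ⊆ {1,…,m} \ {i}}, define b = 1 if p_S ≤ α for every S ⊆ {1,…,m} and b = 0 otherwise, and define p̃_i*(α) = max(p_i*, b). Define Ŝ^ICP = ⋂{S ⊆ {1,…,m} : p_S > α} if there exists at least one S with p_S > α, and Ŝ^ICP = ∅ otherwise. Then {i ∈ {1,…,m} : p̃_i*(α) ≤ α} = Ŝ^ICP. -/

import Mathlib

open Finset

/-- `pstar p I` is the maximum of `p U` over all subsets `U ⊆ {1,…,m} \ I`,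
i.e. over all `U` disjoint from `I` (including `U = ∅`). -/
noncomputable def pstar {m : ℕ} (p : Finset (Fin m) → ℝ) (I : Finset (Fin m)) : ℝ :=
  ((univ : Finset (Fin m)).powerset.filter fun U => Disjoint U I).sup' ⟨∅, by simp⟩ p

/-- The ICP discovery set: the intersection of all sets `S` with `p S > α`,
with the convention that it is `∅` when every hypothesis is rejected. -/
noncomputable def ShatICP {m : ℕ} (p : Finset (Fin m) → ℝ) (α : ℝ) : Set (Fin m) :=
  if ∃ S : Finset (Fin m), α < p S then
    ⋂ S ∈ {S : Finset (Fin m) | α < p S}, (S : Set (Fin m))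
  else ∅

lemma pstar_le_iff {m : ℕ} (p : Finset (Fin m) → ℝ) (i : Fin m) (α : ℝ) :
    pstar p {i} ≤ α ↔ ∀ U : Finset (Fin m), i ∉ U → p U ≤ α := by
  unfold pstar
  refine (Finset.sup'_le_iff ..).trans ?_
  constructor
  · intro h U hU
    exact h U (by simp [Finset.disjoint_singleton_right, hU])
  · intro h U hU
    simp only [mem_filter, Finset.disjoint_singleton_right] at hU
    exact h U hU.2

/-- Proposition 2: with `b = Π_S 1_{p_S ≤ α}` and `p̃ᵢ*(α) = max (pᵢ*, b)`, the
set `{i : p̃ᵢ*(α) ≤ α}` coincides with the ICP discovery set `Ŝ^ICP`. -/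
theorem stmt_8 (m : ℕ) (hm : 1 ≤ m) (p : Finset (Fin m) → ℝ)
    (α : ℝ) (hα : α ∈ Set.Ioo (0 : ℝ) 1)
    (b : ℝ) (hb : b = if ∀ S : Finset (Fin m), p S ≤ α then (1 : ℝ) else 0) :
    {i : Fin m | max (pstar p {i}) b ≤ α} = ShatICP p α := by
  obtain ⟨hα0, hα1⟩ := hα
  by_cases hex : ∃ S : Finset (Fin m), α < p S
  · have hnot : ¬ ∀ S : Finset (Fin m), p S ≤ α := by
      obtain ⟨S, hS⟩ := hex
      exact fun h => absurd (h S) (not_le.mpr hS)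
    have hb0 : b = 0 := by simp [hb, hnot]
    ext i
    simp only [ShatICP, if_pos hex, Set.mem_setOf_eq, Set.mem_iInter, Finset.mem_coe,
      hb0, max_le_iff]
    constructor
    · rintro ⟨h1, _⟩ S hS
      by_contra hi
      exact absurd ((pstar_le_iff p i α).mp h1 S hi) (not_le.mpr hS)
    · intro h
      refine ⟨(pstar_le_iff p i α).mpr fun U hU => ?_, le_of_lt hα0⟩
      by_contra hc
      exact hU (h U (not_le.mp hc))
  · have hall : ∀ S : Finset (Fin m), p S ≤ α := by
      intro S; by_contra h; exact hex ⟨S, not_le.mp h⟩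
    have hb1 : b = 1 := by simp [hb, hall]
    ext i
    simp only [ShatICP, if_neg hex, Set.mem_empty_iff_false, iff_false, Set.mem_setOf_eq,
      hb1, max_le_iff, not_and_or]
    exact Or.inr (not_le.mpr hα1)
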